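/- Let r ≥ 2 be an integer and let K₁ : ℝ → ℝ be integrable with ∫ tʲ K₁(t) dt = 0 for every integer j with 1 ≤ j ≤ r − 1, and ∫ |t|^r |K₁(t)| dt < ∞. Let f : ℝ → ℝ be (r−1)-times differentiable with |f^{(r-1)}(x)| ≤ M for all x ∈ ℝ. Then for every b ∈ ℝ and every h > 0, |∫ t K₁(t) f(h t + b) dt| ≤ (M / (r−1)!) (∫ |t|^r |K₁(t)| dt) · h^{r-1}. -/

import Mathlib

open MeasureTheory

private lemma growR {F F' : ℝ → ℝ} {b C : ℝ} {n : ℕ}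
    (hF : ∀ x, HasDerivAt F (F' x) x) (hFb : F b = 0)
    (hd : ∀ x, |F' x| ≤ C * |x - b| ^ n) {y : ℝ} (hy : b ≤ y) :
    |F y| ≤ C / (n + 1) * (y - b) ^ (n + 1) := by
  have hB : ∀ x : ℝ, HasDerivAt (fun x => C / (n + 1 : ℝ) * (x - b) ^ (n + 1))
      (C * (x - b) ^ n) x := by
    intro x
    have h : HasDerivAt (fun x => C / (n + 1 : ℝ) * (x - b) ^ (n + 1))
        (C / (n + 1 : ℝ) * (((n + 1 : ℕ) : ℝ) * (x - b) ^ (n + 1 - 1) * 1)) x :=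
      (((hasDerivAt_id x).sub_const b).pow (n + 1)).const_mul (C / (n + 1 : ℝ))
    convert h using 1
    have hn : ((n : ℝ) + 1) ≠ 0 := by positivity
    simp only [Nat.add_sub_cancel, mul_one]
    push_cast
    field_simp
  have key := image_norm_le_of_norm_deriv_right_le_deriv_boundary
    (f := F) (f' := F') (a := b) (b := y)
    (fun x _ => (hF x).continuousAt.continuousWithinAt)
    (fun x _ => (hF x).hasDerivWithinAt)
    (B := fun x => C / (n + 1 : ℝ) * (x - b) ^ (n + 1)) (B' := fun x => C * (x - b) ^ n)
    (by simp [hFb]) hB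
    (fun x hx => by
      rw [Real.norm_eq_abs]
      calc |F' x| ≤ C * |x - b| ^ n := hd x
        _ = C * (x - b) ^ n := by rw [abs_of_nonneg (sub_nonneg.2 hx.1)])
  simpa [Real.norm_eq_abs] using key (Set.right_mem_Icc.2 hy)

private lemma grow {F F' : ℝ → ℝ} {b C : ℝ} {n : ℕ}
    (hF : ∀ x, HasDerivAt F (F' x) x) (hFb : F b = 0)
    (hd : ∀ x, |F' x| ≤ C * |x - b| ^ n) (y : ℝ) :
    |F y| ≤ C / (n + 1) * |y - b| ^ (n + 1) := by
  rcases le_total b y with hy | hy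
  · rw [abs_of_nonneg (sub_nonneg.2 hy)]
    exact growR hF hFb hd hy
  · have hG : ∀ x, HasDerivAt (fun x => F (2 * b - x)) (-(F' (2 * b - x))) x := by
      intro x
      have h1 : HasDerivAt (fun x : ℝ => 2 * b - x) (-1) x := by
        simpa using (hasDerivAt_id x).const_sub (2 * b)
      have h2 := (hF (2 * b - x)).comp x h1
      simpa [Function.comp_def] using h2
    have hGb : (fun x => F (2 * b - x)) b = 0 := by
      show F (2 * b - b) = 0
      rw [show 2 * b - b = b by ring, hFb]
    have hd' : ∀ x, |(-(F' (2 * b - x)))| ≤ C * |x - b| ^ n := by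
      intro x
      rw [abs_neg]
      have h3 := hd (2 * b - x)
      rwa [show 2 * b - x - b = -(x - b) by ring, abs_neg] at h3
    have key := growR hG hGb hd' (y := 2 * b - y) (by linarith)
    rw [show 2 * b - (2 * b - y) = y by ring] at key
    rw [show |y - b| = -(y - b) from abs_of_nonpos (by linarith)]
    rwa [show 2 * b - y - b = -(y - b) by ring] at key

private lemma taylor_bound_aux : ∀ (n : ℕ) (f : ℝ → ℝ),
    (∀ i < n, Differentiable ℝ (iteratedDeriv i f)) →
    ∀ (M : ℝ), (∀ x, |iteratedDeriv n f x| ≤ M) → ∀ (b y : ℝ),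
    |f y - ∑ i ∈ Finset.range n, iteratedDeriv i f b / i.factorial * (y - b) ^ i|
      ≤ M / n.factorial * |y - b| ^ n := by
  intro n
  induction n with
  | zero => intro f _ M hM b y; simpa using hM y
  | succ n ih =>
    intro f hdiff M hM b y
    have hf0 : Differentiable ℝ f := by
      simpa [iteratedDeriv_zero] using hdiff 0 (Nat.succ_pos n)
    have ihg := ih (deriv f)
      (fun i hi => by rw [← iteratedDeriv_succ']; exact hdiff (i + 1) (by omega)) M
      (fun x => by rw [← iteratedDeriv_succ']; exact hM x) b
    set F : ℝ → ℝ := fun y =>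
      f y - ∑ i ∈ Finset.range (n + 1), iteratedDeriv i f b / i.factorial * (y - b) ^ i with hFdef
    have hFb : F b = 0 := by
      simp [hFdef, Finset.sum_range_succ', iteratedDeriv_zero]
    have hterm : ∀ (i : ℕ) (z : ℝ),
        iteratedDeriv (i + 1) f b / (i + 1).factorial * (((i : ℝ) + 1) * z ^ i * 1)
          = iteratedDeriv (i + 1) f b / i.factorial * z ^ i := by
      intro i z
      have h1 : ((i + 1).factorial : ℝ) = ((i : ℝ) + 1) * i.factorial := by
        push_cast [Nat.factorial_succ]; ring
      have h2 : (i.factorial : ℝ) ≠ 0 := Nat.cast_ne_zero.2 i.factorial_ne_zero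
      have h3 : ((i : ℝ) + 1) ≠ 0 := by positivity
      rw [h1]
      field_simp
    have hF : ∀ x, HasDerivAt F
        (deriv f x - ∑ i ∈ Finset.range n, iteratedDeriv (i + 1) f b / i.factorial * (x - b) ^ i)
        x := by
      intro x
      have hsum : HasDerivAt
          (fun y => ∑ i ∈ Finset.range (n + 1), iteratedDeriv i f b / i.factorial * (y - b) ^ i)
          (∑ i ∈ Finset.range (n + 1),
            iteratedDeriv i f b / i.factorial * ((i : ℝ) * (x - b) ^ (i - 1) * 1)) x :=
        HasDerivAt.fun_sum fun i _ => (((hasDerivAt_id x).sub_const b).pow i).const_mul _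
      have heq : (∑ i ∈ Finset.range (n + 1),
            iteratedDeriv i f b / i.factorial * ((i : ℝ) * (x - b) ^ (i - 1) * 1))
          = ∑ i ∈ Finset.range n, iteratedDeriv (i + 1) f b / i.factorial * (x - b) ^ i := by
        rw [Finset.sum_range_succ']
        simp only [Nat.cast_zero, zero_mul, mul_zero, add_zero, Nat.add_sub_cancel]
        refine Finset.sum_congr rfl fun i _ => ?_
        push_cast
        exact hterm i (x - b)
      rw [← heq]
      exact ((hf0 x).hasDerivAt).sub hsum
    have hd : ∀ x,
        |deriv f x - ∑ i ∈ Finset.range n, iteratedDeriv (i + 1) f b / i.factorial * (x - b) ^ i|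
          ≤ (M / n.factorial) * |x - b| ^ n := by
      intro x
      have := ihg x
      simpa [← iteratedDeriv_succ'] using this
    have key := grow hF hFb hd y
    have hfac : (M / n.factorial) / ((n : ℝ) + 1) = M / (n + 1).factorial := by
      have h1 : ((n + 1).factorial : ℝ) = ((n : ℝ) + 1) * n.factorial := by
        push_cast [Nat.factorial_succ]; ring
      rw [h1, div_div]
      ring_nf
    rw [hfac] at key
    exact key

private lemma integrable_pow_mul_kernel {K₁ : ℝ → ℝ} (hK₁ : Integrable K₁) {r : ℕ}
    (hKr : Integrable (fun t => |t| ^ r * |K₁ t|)) {j : ℕ} (hj : j ≤ r) :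
    Integrable (fun t : ℝ => t ^ j * K₁ t) := by
  refine (hK₁.abs.add hKr).mono
    ((continuous_pow j).aestronglyMeasurable.mul hK₁.1) ?_
  filter_upwards with t
  simp only [Pi.add_apply, Real.norm_eq_abs, abs_mul, abs_pow]
  have h1 : (0:ℝ) ≤ |K₁ t| + |t| ^ r * |K₁ t| := by positivity
  rw [abs_of_nonneg h1]
  rcases le_total |t| 1 with ht | ht
  · have h2 : |t| ^ j ≤ 1 := pow_le_one₀ (abs_nonneg t) ht
    nlinarith [abs_nonneg (K₁ t), pow_nonneg (abs_nonneg t) r]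
  · have h2 : |t| ^ j ≤ |t| ^ r := pow_le_pow_right₀ ht hj
    nlinarith [abs_nonneg (K₁ t)]


/-- Kernel bias bound for the density term: if `K₁` has vanishing moments of orders
`1, …, r − 1` and a finite absolute `r`-th moment, and `f` is `(r−1)`-times
differentiable with `(r−1)`-th derivative bounded by `M`, then for every `b` and `h > 0`,
`|∫ t K₁(t) f(ht + b) dt| ≤ (M / (r−1)!) (∫ |t|^r |K₁(t)| dt) h^{r−1}`. -/
theorem kernel_density_bias_bound
    (r : ℕ) (hr : 2 ≤ r) (K₁ : ℝ → ℝ) (hK₁ : Integrable K₁)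
    (hmom : ∀ j : ℕ, 1 ≤ j → j ≤ r - 1 → ∫ t, t ^ j * K₁ t = 0)
    (hKr : Integrable (fun t => |t| ^ r * |K₁ t|))
    (f : ℝ → ℝ) (M : ℝ)
    (hdiff : ∀ i < r - 1, Differentiable ℝ (iteratedDeriv i f))
    (hM : ∀ x, |iteratedDeriv (r - 1) f x| ≤ M) :
    ∀ b : ℝ, ∀ h : ℝ, 0 < h →
      |∫ t, t * K₁ t * f (h * t + b)| ≤
        (M / (r - 1).factorial) * (∫ t, |t| ^ r * |K₁ t|) * h ^ (r - 1) := by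
  obtain ⟨m, rfl⟩ : ∃ m, r = m + 2 := ⟨r - 2, by omega⟩
  have hr1 : m + 2 - 1 = m + 1 := rfl
  rw [hr1] at hdiff hM ⊢
  rw [hr1] at hmom
  intro b h hh
  set c : ℕ → ℝ := fun i => iteratedDeriv i f b / i.factorial with hc
  set P : ℝ → ℝ := fun t => ∑ i ∈ Finset.range (m + 1), c i * (h * t) ^ i with hP
  -- Taylor bound
  have htay : ∀ t : ℝ, |f (h * t + b) - P t| ≤
      M / (m + 1).factorial * h ^ (m + 1) * |t| ^ (m + 1) := by
    intro t
    have := taylor_bound_aux (m + 1) f hdiff M hM b (h * t + b)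
    rw [show h * t + b - b = h * t by ring] at this
    calc |f (h * t + b) - P t| ≤ M / (m + 1).factorial * |h * t| ^ (m + 1) := this
      _ = M / (m + 1).factorial * h ^ (m + 1) * |t| ^ (m + 1) := by
          rw [abs_mul, abs_of_pos hh, mul_pow]; ring
  -- continuity of f and P
  have hfc : Continuous f := by
    have := hdiff 0 (by omega)
    rw [iteratedDeriv_zero] at this
    exact this.continuous
  have hPc : Continuous P := by
    apply continuous_finset_sum
    intro i _
    fun_prop
  -- the polynomial part integrates to zero
  set g : ℕ → ℝ → ℝ := fun i t => (c i * h ^ i) * (t ^ (i + 1) * K₁ t) with hg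
  have hgint : ∀ i ∈ Finset.range (m + 1), Integrable (g i) := fun i hi =>
    (integrable_pow_mul_kernel hK₁ hKr (by
      simp only [Finset.mem_range] at hi; omega)).const_mul _
  have hgzero : ∀ i ∈ Finset.range (m + 1), ∫ t, g i t = 0 := by
    intro i hi
    simp only [Finset.mem_range] at hi
    rw [hg]
    simp only
    rw [integral_const_mul, hmom (i + 1) (by omega) (by omega), mul_zero]
  have hPeq : ∀ t : ℝ, t * K₁ t * P t = ∑ i ∈ Finset.range (m + 1), g i t := by
    intro t
    rw [hP, hg]
    simp only
    rw [Finset.mul_sum]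
    refine Finset.sum_congr rfl fun i _ => ?_
    ring
  -- the remainder part
  set D : ℝ → ℝ := fun t => t * K₁ t * (f (h * t + b) - P t) with hD
  have hDbound : ∀ t : ℝ, |D t| ≤
      (M / (m + 1).factorial * h ^ (m + 1)) * (|t| ^ (m + 2) * |K₁ t|) := by
    intro t
    rw [hD]
    simp only
    rw [abs_mul, abs_mul]
    calc |t| * |K₁ t| * |f (h * t + b) - P t|
        ≤ |t| * |K₁ t| * (M / (m + 1).factorial * h ^ (m + 1) * |t| ^ (m + 1)) := by
          apply mul_le_mul_of_nonneg_left (htay t) (by positivity)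
      _ = (M / (m + 1).factorial * h ^ (m + 1)) * (|t| ^ (m + 2) * |K₁ t|) := by
          rw [show (m + 2) = (m + 1) + 1 from rfl, pow_succ]
          ring
  have hDmeas : AEStronglyMeasurable D volume := by
    apply AEStronglyMeasurable.mul
    · exact aestronglyMeasurable_id.mul hK₁.1
    · exact ((hfc.comp (by fun_prop)).sub hPc).aestronglyMeasurable
  have hDint : Integrable D := by
    refine (hKr.const_mul (M / (m + 1).factorial * h ^ (m + 1))).mono hDmeas ?_
    filter_upwards with t
    rw [Real.norm_eq_abs, Real.norm_eq_abs]
    refine (hDbound t).trans (le_abs_self _)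
  -- decomposition
  have hsplit : ∀ t : ℝ, t * K₁ t * f (h * t + b) = D t + ∑ i ∈ Finset.range (m + 1), g i t := by
    intro t
    rw [← hPeq, hD]
    ring
  have hint_eq : ∫ t, t * K₁ t * f (h * t + b) = ∫ t, D t := by
    rw [show (fun t => t * K₁ t * f (h * t + b))
        = fun t => D t + ∑ i ∈ Finset.range (m + 1), g i t from funext hsplit]
    rw [integral_add hDint (integrable_finset_sum _ hgint), integral_finset_sum _ hgint,
      Finset.sum_congr rfl hgzero]
    simp
  rw [hint_eq]
  calc |∫ t, D t| ≤ ∫ t, (M / (m + 1).factorial * h ^ (m + 1)) * (|t| ^ (m + 2) * |K₁ t|) := by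
        rw [show |∫ t, D t| = ‖∫ t, D t‖ from (Real.norm_eq_abs _).symm]
        apply norm_integral_le_of_norm_le (hKr.const_mul _)
        filter_upwards with t
        rw [Real.norm_eq_abs]
        exact hDbound t
    _ = (M / (m + 1).factorial) * (∫ t, |t| ^ (m + 2) * |K₁ t|) * h ^ (m + 1) := by
        rw [integral_const_mul]; ring
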